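/- In the authentication code obtained from a Youden square arrangement of a (v,k,λ)-SBIBD with equiprobable sources, the success probability of any key-substitution attack (replacing the known key K by any K' ≠ K) is exactly λ/k = (k−1)/(v−1). -/
import Mathlib


open Finset

theorem stmt_9 {X : Type*} [Fintype X] [DecidableEq X] (v k lam : ℕ)
    (hX : Fintype.card X = v) (hk : 0 < k) (hv : 1 < v)
    (hnum : lam * (v - 1) = k * (k - 1))
    (E : Fin v → Fin k → X)
    (hrow : ∀ K : Fin v, Function.Injective (E K))
    (hcol : ∀ i : Fin k, Function.Bijective fun K : Fin v => E K i)
    (hpair : ∀ x y : X, x ≠ y →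
      (univ.filter fun K : Fin v => (∃ i, E K i = x) ∧ ∃ j, E K j = y).card = lam) :
    ∀ K K' : Fin v, K ≠ K' →
      ((univ.filter fun i : Fin k => ∃ j : Fin k, j ≠ i ∧ E K' j = E K i).card : ℚ) / k
          = (lam : ℚ) / k ∧
        (lam : ℚ) / k = ((k : ℚ) - 1) / ((v : ℚ) - 1) := by
  classical
  intro K K' hKK
  set R : Fin v → Finset X := fun K0 => Finset.image (E K0) Finset.univ with hR
  have hmemR : ∀ (K0 : Fin v) (x : X), x ∈ R K0 ↔ ∃ i, E K0 i = x := by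
    intro K0 x
    simp [hR]
  have hcardR : ∀ K0 : Fin v, (R K0).card = k := by
    intro K0
    rw [hR]
    rw [Finset.card_image_of_injective _ (hrow K0), Finset.card_univ, Fintype.card_fin]
  -- each point lies in exactly k rows
  have hpoint : ∀ x : X, (univ.filter fun K0 : Fin v => x ∈ R K0).card = k := by
    intro x
    set g : Fin k → Fin v := fun i => (Equiv.ofBijective _ (hcol i)).symm x with hg
    have hgE : ∀ i, E (g i) i = x := fun i =>
      (Equiv.ofBijective _ (hcol i)).apply_symm_apply x
    have hginj : Function.Injective g := by
      intro i j hij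
      apply hrow (g i)
      rw [hgE i]
      rw [hij]
      exact (hgE j).symm
    have hset : (univ.filter fun K0 : Fin v => x ∈ R K0) = Finset.image g Finset.univ := by
      ext K0
      constructor
      · intro hK0
        obtain ⟨i, hi⟩ := (hmemR K0 x).mp (Finset.mem_filter.mp hK0).2
        exact Finset.mem_image.mpr
          ⟨i, mem_univ i, (Equiv.ofBijective _ (hcol i)).symm_apply_eq.mpr hi.symm⟩
      · intro hK0
        obtain ⟨i, -, rfl⟩ := Finset.mem_image.mp hK0
        exact Finset.mem_filter.mpr ⟨mem_univ _, (hmemR _ x).mpr ⟨i, hgE i⟩⟩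

    rw [hset, Finset.card_image_of_injective _ hginj, Finset.card_univ, Fintype.card_fin]
  -- abbreviation for intersection sizes
  set n : Fin v → ℤ := fun K0 => ((R K ∩ R K0).card : ℤ) with hn
  set e : Finset (Fin v) := Finset.univ.erase K with he
  have hecard : e.card = v - 1 := by
    rw [he, Finset.card_erase_of_mem (mem_univ K), Finset.card_univ, Fintype.card_fin]
  have hvZ : (((v - 1 : ℕ)) : ℤ) = (v : ℤ) - 1 := by omega
  have hkZ : (((k - 1 : ℕ)) : ℤ) = (k : ℤ) - 1 := by omega
  -- indicator expression
  have hind : ∀ K0 : Fin v, n K0 = ∑ x ∈ R K, (if x ∈ R K0 then (1:ℤ) else 0) := by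
    intro K0
    show ((R K ∩ R K0).card : ℤ) = _
    rw [← Finset.filter_mem_eq_inter, Finset.natCast_card_filter]
  -- sum over e of indicator for a fixed point x in R K
  have hcount1 : ∀ x : X, x ∈ R K → (e.filter fun K0 => x ∈ R K0).card = k - 1 := by
    intro x hx
    rw [he, Finset.filter_erase, Finset.card_erase_of_mem, hpoint]
    rw [Finset.mem_filter]
    exact ⟨mem_univ K, hx⟩
  have hcount2 : ∀ x y : X, x ∈ R K → y ∈ R K → x ≠ y →
      ((e.filter fun K0 => x ∈ R K0 ∧ y ∈ R K0).card : ℤ) = (lam:ℤ) - 1 := by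
    intro x y hx hy hxy
    have heq : (univ.filter fun K0 : Fin v => x ∈ R K0 ∧ y ∈ R K0).card = lam := by
      rw [← hpair x y hxy]
      congr 1
      apply Finset.filter_congr
      intro K0 _
      simp [hmemR]
    have hKmem : K ∈ univ.filter fun K0 : Fin v => x ∈ R K0 ∧ y ∈ R K0 := by
      rw [Finset.mem_filter]
      exact ⟨mem_univ K, hx, hy⟩
    have hlam1 : 1 ≤ lam := by
      rw [← heq]
      exact Finset.card_pos.mpr ⟨K, hKmem⟩
    rw [he, Finset.filter_erase, Finset.card_erase_of_mem hKmem, heq]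
    push_cast [Nat.cast_sub hlam1]
    ring
  -- first moment
  have h1 : ∑ K0 ∈ e, n K0 = (k : ℤ) * ((k:ℤ) - 1) := by
    calc ∑ K0 ∈ e, n K0 = ∑ K0 ∈ e, ∑ x ∈ R K, (if x ∈ R K0 then (1:ℤ) else 0) := by
          exact Finset.sum_congr rfl fun K0 _ => hind K0
      _ = ∑ x ∈ R K, ∑ K0 ∈ e, (if x ∈ R K0 then (1:ℤ) else 0) := Finset.sum_comm
      _ = ∑ x ∈ R K, ((e.filter fun K0 => x ∈ R K0).card : ℤ) := by
          refine Finset.sum_congr rfl fun x _ => ?_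
          rw [Finset.natCast_card_filter]
      _ = ∑ x ∈ R K, ((k:ℤ) - 1) := by
          refine Finset.sum_congr rfl fun x hx => ?_
          rw [hcount1 x hx, hkZ]
      _ = (k : ℤ) * ((k:ℤ) - 1) := by
          rw [Finset.sum_const, hcardR K]
          ring
  -- second moment
  have h2 : ∑ K0 ∈ e, (n K0)^2 = (k : ℤ) * ((k:ℤ) - 1) * lam := by
    have step : ∀ K0 : Fin v, (n K0)^2
        = ∑ x ∈ R K, ∑ y ∈ R K, (if x ∈ R K0 ∧ y ∈ R K0 then (1:ℤ) else 0) := by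
      intro K0
      rw [sq, hind K0, Finset.sum_mul_sum]
      refine Finset.sum_congr rfl fun x _ => Finset.sum_congr rfl fun y _ => ?_
      by_cases hx : x ∈ R K0 <;> by_cases hy : y ∈ R K0 <;> simp [hx, hy]
    calc ∑ K0 ∈ e, (n K0)^2
        = ∑ K0 ∈ e, ∑ x ∈ R K, ∑ y ∈ R K, (if x ∈ R K0 ∧ y ∈ R K0 then (1:ℤ) else 0) :=
          Finset.sum_congr rfl fun K0 _ => step K0
      _ = ∑ x ∈ R K, ∑ K0 ∈ e, ∑ y ∈ R K, (if x ∈ R K0 ∧ y ∈ R K0 then (1:ℤ) else 0) :=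
          Finset.sum_comm
      _ = ∑ x ∈ R K, ∑ y ∈ R K, ∑ K0 ∈ e, (if x ∈ R K0 ∧ y ∈ R K0 then (1:ℤ) else 0) :=
          Finset.sum_congr rfl fun x _ => Finset.sum_comm
      _ = ∑ x ∈ R K, ∑ y ∈ R K, (if x = y then ((k:ℤ) - 1) else ((lam:ℤ) - 1)) := by
          refine Finset.sum_congr rfl fun x hx => Finset.sum_congr rfl fun y hy => ?_
          rw [Finset.sum_boole]
          rcases eq_or_ne x y with rfl | hxy
          · simp only [if_pos rfl]
            have h : (e.filter fun K0 => x ∈ R K0 ∧ x ∈ R K0).card = k - 1 := by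
              rw [← hcount1 x hx]
              congr 1
              simp
            rw [show {K0 ∈ e | x ∈ R K0 ∧ x ∈ R K0} = e.filter fun K0 => x ∈ R K0 ∧ x ∈ R K0 from rfl, h, hkZ]
            simp
          · rw [if_neg hxy]
            exact hcount2 x y hx hy hxy
      _ = ∑ x ∈ R K, (((k:ℤ) - 1) + ((k:ℤ) - 1) * ((lam:ℤ) - 1)) := by
          refine Finset.sum_congr rfl fun x hx => ?_
          rw [← Finset.add_sum_erase _ _ hx, if_pos rfl]
          congr 1
          rw [Finset.sum_congr rfl (fun y hy => if_neg (Finset.ne_of_mem_erase hy).symm)]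
          rw [Finset.sum_const, Finset.card_erase_of_mem hx, hcardR K, nsmul_eq_mul, hkZ]
      _ = (k : ℤ) * ((k:ℤ) - 1) * lam := by
          rw [Finset.sum_const, hcardR K, nsmul_eq_mul]
          ring
  -- variance is zero
  have hnumZ : (lam : ℤ) * ((v:ℤ) - 1) = (k:ℤ) * ((k:ℤ)-1) := by
    have := congrArg (Nat.cast : ℕ → ℤ) hnum
    push_cast [Nat.cast_sub hv.le, Nat.cast_sub hk] at this
    linarith
  have hvar : ∑ K0 ∈ e, (n K0 - lam)^2 = 0 := by
    have expand : ∀ K0 : Fin v, (n K0 - lam)^2 = (n K0)^2 - 2 * lam * n K0 + lam^2 := by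
      intro K0; ring
    rw [Finset.sum_congr rfl fun K0 _ => expand K0]
    rw [Finset.sum_add_distrib, Finset.sum_sub_distrib, ← Finset.mul_sum, Finset.sum_const,
      h1, h2, hecard, nsmul_eq_mul, hvZ]
    nlinarith [hnumZ]
  have hzero : ∀ K0 ∈ e, n K0 = (lam : ℤ) := by
    intro K0 hK0
    have := (Finset.sum_eq_zero_iff_of_nonneg (fun K1 _ => sq_nonneg (n K1 - lam))).mp hvar K0 hK0
    have := sq_eq_zero_iff.mp this
    linarith
  have hK'mem : K' ∈ e := by
    rw [he, Finset.mem_erase]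
    exact ⟨hKK.symm, mem_univ K'⟩
  have hinter : (R K ∩ R K').card = lam := by
    have h : ((R K ∩ R K').card : ℤ) = (lam : ℤ) := hzero K' hK'mem
    exact_mod_cast h
  -- identify the attack set with the intersection
  have hmain : (univ.filter fun i : Fin k => ∃ j : Fin k, j ≠ i ∧ E K' j = E K i).card = lam := by
    have hEne : ∀ i : Fin k, E K' i ≠ E K i := by
      intro i h
      exact hKK ((hcol i).injective h).symm
    have hpred : ∀ i : Fin k, (∃ j : Fin k, j ≠ i ∧ E K' j = E K i) ↔ E K i ∈ R K' := by
      intro i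
      constructor
      · rintro ⟨j, -, hj⟩
        rw [hmemR]
        exact ⟨j, hj⟩
      · intro h
        obtain ⟨j, hj⟩ := (hmemR K' (E K i)).mp h
        refine ⟨j, fun hji => ?_, hj⟩
        exact hEne i (hji ▸ hj)
    calc (univ.filter fun i : Fin k => ∃ j : Fin k, j ≠ i ∧ E K' j = E K i).card
        = (univ.filter fun i : Fin k => E K i ∈ R K').card := by
          congr 1
          exact Finset.filter_congr fun i _ => by rw [hpred i]
      _ = ((Finset.image (E K) univ).filter fun x => x ∈ R K').card := by
          rw [Finset.filter_image, Finset.card_image_of_injective _ (hrow K)]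
      _ = (R K ∩ R K').card := by rw [Finset.filter_mem_eq_inter, hR]
      _ = lam := hinter
  constructor
  · rw [hmain]
  · have hkQ : (k:ℚ) ≠ 0 := by positivity
    have hvQ : (v:ℚ) - 1 ≠ 0 := by
      have : (1:ℚ) < v := by exact_mod_cast hv
      linarith
    rw [div_eq_div_iff hkQ hvQ]
    have hnumQ : (lam : ℚ) * ((v:ℚ) - 1) = (k:ℚ) * ((k:ℚ)-1) := by
      have := congrArg (Nat.cast : ℕ → ℚ) hnum
      push_cast [Nat.cast_sub hv.le, Nat.cast_sub hk] at this
      linarith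
    linarith
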